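/- For all natural numbers m > n ≥ 1, log_φ q_{f_n}(f_m) ≥ m - n - 1, where f_k = {F_k, F_{k+1}} and φ = (1+√5)/2. -/

import Mathlib

/-- `q n₁ n₂ m` is the minimum of `|x| + |y|` over integer solutions of `m = n₁·x + n₂·y`. -/
noncomputable def q (n₁ n₂ m : ℕ) : ℕ :=
  sInf {s : ℕ | ∃ x y : ℤ, (m : ℤ) = (n₁ : ℤ) * x + (n₂ : ℤ) * y ∧ s = x.natAbs + y.natAbs}

/-- `qPair n₁ n₂ m₁ m₂ = max (q_{n}(m₁)) (q_{n}(m₂))` for pairs `n = {n₁,n₂}`, `m = {m₁,m₂}`. -/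
noncomputable def qPair (n₁ n₂ m₁ m₂ : ℕ) : ℕ := max (q n₁ n₂ m₁) (q n₁ n₂ m₂)

open goldenRatio in
lemma gold_pow_le_fib (n : ℕ) : φ ^ n ≤ (Nat.fib (n + 2) : ℝ) := by
  induction n using Nat.twoStepInduction with
  | zero => simp
  | one =>
    have := Real.goldenRatio_lt_two
    simp only [pow_one]
    norm_num [Nat.fib]
    linarith
  | more n ih1 ih2 =>
    have h : φ ^ (n + 2) = φ ^ (n + 1) + φ ^ n := by
      have := Real.goldenRatio_pow_sub_goldenRatio_pow n; linarith
    have hf : Nat.fib (n + 4) = Nat.fib (n + 3) + Nat.fib (n + 2) := by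
      rw [show n + 4 = (n + 2) + 2 by ring, Nat.fib_add_two]; ring
    rw [h]
    push_cast [hf]
    linarith

open goldenRatio in
lemma fib_le_gold_pow (n : ℕ) : (Nat.fib (n + 1) : ℝ) ≤ φ ^ n := by
  induction n using Nat.twoStepInduction with
  | zero => simp
  | one =>
    have := Real.one_lt_goldenRatio
    norm_num [Nat.fib]
    linarith
  | more n ih1 ih2 =>
    have h : φ ^ (n + 2) = φ ^ (n + 1) + φ ^ n := by
      have := Real.goldenRatio_pow_sub_goldenRatio_pow n; linarith
    have hf : Nat.fib (n + 3) = Nat.fib (n + 2) + Nat.fib (n + 1) := by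
      rw [show n + 3 = (n + 1) + 2 by ring, Nat.fib_add_two]; ring
    rw [h]
    push_cast [hf]
    linarith

open goldenRatio in
lemma gold_pow_le_q (m n : ℕ) (hn : 1 ≤ n) (hmn : n < m) :
    φ ^ (m - n - 1) ≤ (q (Nat.fib n) (Nat.fib (n + 1)) (Nat.fib (m + 1)) : ℝ) := by
  set S := {s : ℕ | ∃ x y : ℤ, ((Nat.fib (m+1) : ℕ) : ℤ) = (Nat.fib n : ℤ) * x + (Nat.fib (n+1) : ℤ) * y ∧ s = x.natAbs + y.natAbs} with hS
  have hne : S.Nonempty := by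
    have hcop : Nat.Coprime (Nat.fib n) (Nat.fib (n + 1)) := Nat.fib_coprime_fib_succ n
    have hb := Nat.gcd_eq_gcd_ab (Nat.fib n) (Nat.fib (n + 1))
    rw [hcop] at hb
    refine ⟨((Nat.fib (m+1) : ℤ) * Nat.gcdA (Nat.fib n) (Nat.fib (n+1))).natAbs +
      ((Nat.fib (m+1) : ℤ) * Nat.gcdB (Nat.fib n) (Nat.fib (n+1))).natAbs,
      (Nat.fib (m+1) : ℤ) * Nat.gcdA (Nat.fib n) (Nat.fib (n+1)),
      (Nat.fib (m+1) : ℤ) * Nat.gcdB (Nat.fib n) (Nat.fib (n+1)), ?_, rfl⟩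
    push_cast at hb ⊢
    nlinarith [hb]
  have hmem : q (Nat.fib n) (Nat.fib (n + 1)) (Nat.fib (m + 1)) ∈ S := Nat.sInf_mem hne
  obtain ⟨x, y, hxy, hs⟩ := hmem
  -- F_{m+1} ≤ F_{n+1} * (|x| + |y|)
  have hfib_le : (Nat.fib (m + 1) : ℝ) ≤ (Nat.fib (n + 1) : ℝ) * (x.natAbs + y.natAbs) := by
    have h1 : ((Nat.fib (m + 1) : ℕ) : ℤ) ≤ (Nat.fib (n + 1) : ℤ) * (x.natAbs + y.natAbs) := by
      calc ((Nat.fib (m + 1) : ℕ) : ℤ) = (Nat.fib n : ℤ) * x + (Nat.fib (n+1) : ℤ) * y := hxy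
        _ ≤ |(Nat.fib n : ℤ) * x + (Nat.fib (n+1) : ℤ) * y| := le_abs_self _
        _ ≤ |(Nat.fib n : ℤ) * x| + |(Nat.fib (n+1) : ℤ) * y| := abs_add_le _ _
        _ = (Nat.fib n : ℤ) * x.natAbs + (Nat.fib (n+1) : ℤ) * y.natAbs := by
            rw [abs_mul, abs_mul, Int.abs_natCast, Int.abs_natCast,
              Int.abs_eq_natAbs, Int.abs_eq_natAbs]
        _ ≤ (Nat.fib (n+1) : ℤ) * x.natAbs + (Nat.fib (n+1) : ℤ) * y.natAbs := by
            have : (Nat.fib n : ℤ) ≤ (Nat.fib (n+1) : ℤ) := by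
              exact_mod_cast Nat.fib_le_fib_succ
            nlinarith [Int.natCast_nonneg x.natAbs, Int.natCast_nonneg y.natAbs]
        _ = (Nat.fib (n+1) : ℤ) * (x.natAbs + y.natAbs) := by ring
    exact_mod_cast h1
  have hgoldpos : (0:ℝ) < φ := Real.goldenRatio_pos
  have hfn1 : (0:ℝ) < Nat.fib (n + 1) := by
    exact_mod_cast Nat.fib_pos.mpr (Nat.succ_pos n)
  -- φ^{m-1} ≤ F_{m+1} and F_{n+1} ≤ φ^n
  have h1 : φ ^ (m - 1) ≤ (Nat.fib (m + 1) : ℝ) := by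
    have := gold_pow_le_fib (m - 1)
    rwa [show m - 1 + 2 = m + 1 by omega] at this
  have h2 : (Nat.fib (n + 1) : ℝ) ≤ φ ^ n := fib_le_gold_pow n
  have hkey : φ ^ (m - 1) ≤ φ ^ n * (x.natAbs + y.natAbs : ℝ) := by
    calc φ ^ (m - 1) ≤ (Nat.fib (m + 1) : ℝ) := h1
      _ ≤ (Nat.fib (n + 1) : ℝ) * (x.natAbs + y.natAbs) := hfib_le
      _ ≤ φ ^ n * (x.natAbs + y.natAbs) := by
          apply mul_le_mul_of_nonneg_right h2; positivity
  have hsplit : φ ^ (m - 1) = φ ^ n * φ ^ (m - n - 1) := by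
    rw [← pow_add]; congr 1; omega
  rw [hsplit] at hkey
  have : φ ^ (m - n - 1) ≤ ((x.natAbs + y.natAbs : ℕ) : ℝ) := by
    have hpn : (0:ℝ) < φ ^ n := by positivity
    push_cast
    nlinarith [hkey, hpn]
  rw [hs]
  exact_mod_cast this

theorem stmt_9 (m n : ℕ) (hn : 1 ≤ n) (hmn : n < m) :
    (m : ℝ) - n - 1 ≤ Real.logb ((1 + Real.sqrt 5) / 2)
      (qPair (Nat.fib n) (Nat.fib (n + 1)) (Nat.fib m) (Nat.fib (m + 1))) := by
  have hq := gold_pow_le_q m n hn hmn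
  have hone : (1:ℝ) ≤ Real.goldenRatio ^ (m - n - 1) :=
    one_le_pow₀ (le_of_lt Real.one_lt_goldenRatio)
  have hqpos : (0:ℝ) < (q (Nat.fib n) (Nat.fib (n + 1)) (Nat.fib (m + 1)) : ℝ) := by
    linarith
  have hqP : (q (Nat.fib n) (Nat.fib (n + 1)) (Nat.fib (m + 1)) : ℝ) ≤
      (qPair (Nat.fib n) (Nat.fib (n + 1)) (Nat.fib m) (Nat.fib (m + 1)) : ℝ) := by
    exact_mod_cast le_max_right _ _
  have hqPpos : (0:ℝ) < (qPair (Nat.fib n) (Nat.fib (n + 1)) (Nat.fib m) (Nat.fib (m + 1)) : ℝ) :=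
    lt_of_lt_of_le hqpos hqP
  have hbase : ((1 + Real.sqrt 5) / 2 : ℝ) = Real.goldenRatio := rfl
  rw [hbase, Real.le_logb_iff_rpow_le Real.one_lt_goldenRatio hqPpos]
  have hcast : ((m:ℝ) - n - 1) = ((m - n - 1 : ℕ) : ℝ) := by
    rw [Nat.cast_sub (by omega : 1 ≤ m - n), Nat.cast_sub (le_of_lt hmn)]
    norm_num
  rw [hcast, Real.rpow_natCast]
  exact le_trans hq hqP
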